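/- Let X be a Polish space and let P and Q be two strong Feller Markov kernels on X. Then the composed Markov kernel PQ, defined by (PQ)(x,A) = ∫ Q(y,A) P(x,dy), is ultra Feller. -/

import Mathlib

open MeasureTheory ProbabilityTheory Filter
open scoped ENNReal Topology

/-- A Markov kernel is *strong Feller* if it maps bounded measurable functions to
continuous functions. -/
def StrongFeller {X : Type*} [MeasurableSpace X] [TopologicalSpace X] (P : Kernel X X) : Prop :=
  ∀ f : X → ℝ, Measurable f → (∃ C, ∀ x, |f x| ≤ C) →
    Continuous fun x => ∫ y, f y ∂(P x)

/-- The total variation distance between two finite measures: the total mass of the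
variation `|μ − ν|`, computed as the supremum over measurable sets `A` of
`(μ(A) − ν(A)) + (ν(Aᶜ) − μ(Aᶜ))`. -/
noncomputable def tvDist {α : Type*} [MeasurableSpace α] (μ ν : Measure α) : ℝ≥0∞ :=
  ⨆ (A : Set α) (_ : MeasurableSet A), (μ A - ν A) + (ν Aᶜ - μ Aᶜ)

/-- A kernel is *ultra Feller* if its transition probabilities are continuous in the
total variation distance. -/
def UltraFeller {X : Type*} [MeasurableSpace X] [TopologicalSpace X] (P : Kernel X X) : Prop :=
  ∀ x, Filter.Tendsto (fun y => tvDist (P y) (P x)) (nhds x) (nhds 0)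

section Helpers

variable {X : Type*} [MeasurableSpace X]

private lemma ennreal_sub3 (a b c : ℝ≥0∞) : a - c ≤ (a - b) + (b - c) := by
  rw [tsub_le_iff_right]
  calc a ≤ (a - b) + b := le_tsub_add
    _ ≤ (a - b) + ((b - c) + c) := by gcongr; exact le_tsub_add
    _ = (a - b) + (b - c) + c := by ring

private lemma ennreal_split (a b c d : ℝ≥0∞) (hb : b ≤ a) (hd : d ≤ c) :
    (a - c) + (c - a) ≤ (a - b) + (c - d) + ((b - d) + (d - b)) := by
  have h1 : a - c ≤ (a - b) + (b - d) := by
    refine (ennreal_sub3 a b c).trans ?_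
    gcongr
  have h2 : c - a ≤ (c - d) + (d - b) := by
    refine (ennreal_sub3 c d a).trans ?_
    gcongr
  calc (a - c) + (c - a) ≤ ((a - b) + (b - d)) + ((c - d) + (d - b)) := add_le_add h1 h2
    _ = (a - b) + (c - d) + ((b - d) + (d - b)) := by ring

private lemma lintegral_tsub_le (μ : Measure X) {f g : X → ℝ≥0∞} (hg : Measurable g) :
    ∫⁻ z, f z ∂μ - ∫⁻ z, g z ∂μ ≤ ∫⁻ z, f z - g z ∂μ := by
  rw [tsub_le_iff_right, ← lintegral_add_right _ hg]
  exact lintegral_mono fun z => le_tsub_add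

private lemma tvDist_le_lintegral {ζ μ ν : Measure X} {Wμ Wν : X → ℝ≥0∞}
    (hWμ : Measurable Wμ) (hWν : Measurable Wν)
    (hμ : ∀ A : Set X, MeasurableSet A → μ A = ∫⁻ z in A, Wμ z ∂ζ)
    (hν : ∀ A : Set X, MeasurableSet A → ν A = ∫⁻ z in A, Wν z ∂ζ) :
    tvDist μ ν ≤ ∫⁻ z, (Wμ z - Wν z) + (Wν z - Wμ z) ∂ζ := by
  show (⨆ (A : Set X) (_ : MeasurableSet A), (μ A - ν A) + (ν Aᶜ - μ Aᶜ)) ≤ _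
  refine iSup₂_le fun A hA => ?_
  have h1 : μ A - ν A ≤ ∫⁻ z in A, (Wμ z - Wν z) + (Wν z - Wμ z) ∂ζ := by
    rw [hμ A hA, hν A hA]
    exact (lintegral_tsub_le _ hWν).trans (lintegral_mono fun z => le_self_add)
  have h2 : ν Aᶜ - μ Aᶜ ≤ ∫⁻ z in Aᶜ, (Wμ z - Wν z) + (Wν z - Wμ z) ∂ζ := by
    rw [hμ Aᶜ hA.compl, hν Aᶜ hA.compl]
    exact (lintegral_tsub_le _ hWμ).trans (lintegral_mono fun z => le_add_self)
  calc μ A - ν A + (ν Aᶜ - μ Aᶜ)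
      ≤ (∫⁻ z in A, (Wμ z - Wν z) + (Wν z - Wμ z) ∂ζ)
        + ∫⁻ z in Aᶜ, (Wμ z - Wν z) + (Wν z - Wμ z) ∂ζ := add_le_add h1 h2
    _ = _ := lintegral_add_compl _ hA

private lemma exists_maximal_null_open [TopologicalSpace X] [SecondCountableTopology X]
    (η : Measure X) :
    ∃ V : Set X, η V = 0 ∧ ∀ U : Set X, IsOpen U → η U = 0 → U ⊆ V := by
  obtain ⟨T, hTc, hTsub, hTeq⟩ := TopologicalSpace.isOpen_sUnion_countable
    {U : Set X | IsOpen U ∧ η U = 0} (fun s hs => hs.1)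
  refine ⟨⋃₀ {U : Set X | IsOpen U ∧ η U = 0}, ?_,
    fun U hUo hU0 => Set.subset_sUnion_of_mem ⟨hUo, hU0⟩⟩
  rw [← hTeq, Set.sUnion_eq_biUnion]
  exact (measure_biUnion_null_iff hTc).mpr fun U hU => (hTsub hU).2

/-- Integrals of bounded measurable `ℝ≥0∞`-valued functions against a strong Feller kernel
converge along converging sequences. -/
private lemma StrongFeller.tendsto_lintegral [TopologicalSpace X]
    {P : Kernel X X} [IsMarkovKernel P] (hP : StrongFeller P)
    {x : X} {u : ℕ → X} (hu : Tendsto u atTop (𝓝 x))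
    {g : X → ℝ≥0∞} (hg : Measurable g) {C : ℝ≥0∞} (hC : C ≠ ⊤) (hgC : ∀ y, g y ≤ C) :
    Tendsto (fun n => ∫⁻ y, g y ∂(P (u n))) atTop (𝓝 (∫⁻ y, g y ∂(P x))) := by
  have hgt : ∀ y, ENNReal.ofReal ((g y).toReal) = g y := fun y =>
    ENNReal.ofReal_toReal (ne_top_of_le_ne_top hC (hgC y))
  have hfm : Measurable fun y => (g y).toReal := hg.ennreal_toReal
  have key : ∀ z : X, ∫⁻ y, g y ∂(P z) = ENNReal.ofReal (∫ y, (g y).toReal ∂(P z)) := by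
    intro z
    have hint : Integrable (fun y => (g y).toReal) (P z) := by
      refine Integrable.mono' (integrable_const C.toReal) hfm.aestronglyMeasurable
        (ae_of_all _ fun y => ?_)
      rw [Real.norm_eq_abs, abs_of_nonneg ENNReal.toReal_nonneg]
      exact ENNReal.toReal_mono hC (hgC y)
    calc ∫⁻ y, g y ∂(P z) = ∫⁻ y, ENNReal.ofReal ((g y).toReal) ∂(P z) :=
          lintegral_congr fun y => (hgt y).symm
      _ = ENNReal.ofReal (∫ y, (g y).toReal ∂(P z)) :=
          (ofReal_integral_eq_lintegral_ofReal hint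
            (ae_of_all _ fun y => ENNReal.toReal_nonneg)).symm
  have hcont : Continuous fun z => ∫ y, (g y).toReal ∂(P z) :=
    hP _ hfm ⟨C.toReal, fun y => by
      rw [abs_of_nonneg ENNReal.toReal_nonneg]
      exact ENNReal.toReal_mono hC (hgC y)⟩
  have ht : Tendsto (fun n => ENNReal.ofReal (∫ y, (g y).toReal ∂(P (u n)))) atTop
      (𝓝 (ENNReal.ofReal (∫ y, (g y).toReal ∂(P x)))) :=
    (ENNReal.continuous_ofReal.tendsto _).comp ((hcont.tendsto x).comp hu)
  rw [key x]
  exact Tendsto.congr (fun n => (key (u n)).symm) ht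

end Helpers

section Density

variable {X : Type*} [TopologicalSpace X] [PolishSpace X] [MeasurableSpace X] [BorelSpace X]

/-- The key consequence of the strong Feller property of `Q` : given a finite measure `η`,
for `η`-almost every `y` the measure `Q y` is absolutely continuous with respect to `ζ = ηQ`,
with a jointly measurable density whose `ζ`-integral is at most `1`. -/
private lemma exists_density (Q : Kernel X X) [IsMarkovKernel Q] (hQ : StrongFeller Q)
    (η : Measure X) [IsFiniteMeasure η] (ζ : Measure X) [IsFiniteMeasure ζ]
    (hζ : ∀ A : Set X, MeasurableSet A → ζ A = ∫⁻ y, Q y A ∂η) :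
    ∃ ρ : X → X → ℝ≥0∞, Measurable (Function.uncurry ρ) ∧ (∀ y, ∫⁻ z, ρ y z ∂ζ ≤ 1) ∧
      ∀ᵐ y ∂η, Q y = ζ.withDensity (ρ y) := by
  set κζ : Kernel X X := Kernel.const X ζ with hκζ
  have hSlice0 : ∀ y : X, ζ (Kernel.mutuallySingularSetSlice Q κζ y) = 0 := by
    intro y
    have h := Kernel.measure_mutuallySingularSetSlice Q κζ y
    simpa [hκζ, Kernel.const_apply] using h
  obtain ⟨V, hV0, hVmax⟩ := exists_maximal_null_open η
  -- the support argument : for a.e. `y`, the slice carrying the singular part is `Q y`-null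
  have hQslice : ∀ᵐ y ∂η, Q y (Kernel.mutuallySingularSetSlice Q κζ y) = 0 := by
    have hVc : ∀ᵐ y ∂η, y ∉ V := by
      rw [ae_iff]
      simpa using hV0
    filter_upwards [hVc] with y hyV
    set s := Kernel.mutuallySingularSetSlice Q κζ y with hs
    have hsm : MeasurableSet s := Kernel.measurableSet_mutuallySingularSetSlice Q κζ y
    have hae : ∀ᵐ y' ∂η, Q y' s = 0 := by
      have h0 : ∫⁻ y', Q y' s ∂η = 0 := by rw [← hζ s hsm]; exact hSlice0 y
      exact (lintegral_eq_zero_iff (Q.measurable_coe hsm)).mp h0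
    have hcont : Continuous fun y' => ∫ z, s.indicator (fun _ => (1 : ℝ)) z ∂(Q y') := by
      refine hQ _ (measurable_const.indicator hsm) ⟨1, fun z => ?_⟩
      by_cases hz : z ∈ s <;> simp [Set.indicator_apply, hz]
    have heq : ∀ y' : X, (∫ z, s.indicator (fun _ => (1 : ℝ)) z ∂(Q y')) = (Q y' s).toReal :=
      fun y' => integral_indicator_one hsm
    have hgcont : Continuous fun y' => (Q y' s).toReal := by
      simpa only [heq] using hcont
    have hU0 : η {y' | 0 < (Q y' s).toReal} = 0 := by
      refine measure_mono_null (fun y' hy' => ?_) (ae_iff.mp hae)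
      simp only [Set.mem_setOf_eq] at hy' ⊢
      intro h0
      rw [h0] at hy'
      simp at hy'
    have hUV : {y' | 0 < (Q y' s).toReal} ⊆ V :=
      hVmax _ (isOpen_lt continuous_const hgcont) hU0
    have hy0 : ¬ 0 < (Q y s).toReal := fun h => hyV (hUV h)
    have : (Q y s).toReal = 0 := le_antisymm (not_lt.mp hy0) ENNReal.toReal_nonneg
    have hfin : Q y s ≠ ⊤ := measure_ne_top _ _
    exact (ENNReal.toReal_eq_zero_iff _).mp this |>.resolve_right hfin
  -- hence the singular part vanishes a.e.
  have hsing : ∀ᵐ y ∂η, Q.singularPart κζ y = 0 := by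
    filter_upwards [hQslice] with y hy
    refine Measure.measure_univ_eq_zero.mp ?_
    have hsm := Kernel.measurableSet_mutuallySingularSetSlice Q κζ y
    rw [← measure_add_measure_compl hsm,
      Kernel.singularPart_compl_mutuallySingularSetSlice Q κζ y, add_zero]
    have hdecomp := Kernel.rnDeriv_add_singularPart Q κζ
    have h := congrArg (fun τ : Kernel X X =>
      τ y (Kernel.mutuallySingularSetSlice Q κζ y)) hdecomp
    simp only [Kernel.coe_add, Pi.add_apply, Measure.coe_add] at h
    have h' : (κζ.withDensity (Q.rnDeriv κζ)) y (Kernel.mutuallySingularSetSlice Q κζ y)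
        + Q.singularPart κζ y (Kernel.mutuallySingularSetSlice Q κζ y) = 0 := by
      rw [h, hy]
    exact (add_eq_zero.mp h').2
  -- the density, truncated so that its integral is at most 1 everywhere
  set ρ0 : X → X → ℝ≥0∞ := fun y z => Q.rnDeriv κζ y z with hρ0
  have hρ0m : Measurable (Function.uncurry ρ0) := Kernel.measurable_rnDeriv Q κζ
  have hged : ∀ᵐ y ∂η, Q y = ζ.withDensity (ρ0 y) := by
    filter_upwards [hsing] with y hy
    have hdecomp := Kernel.rnDeriv_add_singularPart Q κζ
    have h := congrArg (fun τ : Kernel X X => τ y) hdecomp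
    simp only [Kernel.coe_add, Pi.add_apply] at h
    rw [hy, add_zero] at h
    rw [← h, Kernel.withDensity_apply _ (Kernel.measurable_rnDeriv Q κζ), hκζ,
      Kernel.const_apply]
  have hEm : Measurable fun y => ∫⁻ z, ρ0 y z ∂ζ := Measurable.lintegral_prod_right' hρ0m
  set E : Set X := {y | ∫⁻ z, ρ0 y z ∂ζ ≤ 1} with hE
  have hEmeas : MeasurableSet E := hEm measurableSet_Iic
  refine ⟨fun y z => (E ×ˢ (Set.univ : Set X)).indicator (Function.uncurry ρ0) (y, z),
    hρ0m.indicator (hEmeas.prod MeasurableSet.univ), fun y => ?_, ?_⟩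
  · by_cases hy : y ∈ E
    · have : ∀ z : X, (E ×ˢ (Set.univ : Set X)).indicator (Function.uncurry ρ0) (y, z)
          = ρ0 y z := fun z => Set.indicator_of_mem (by simp [hy]) _
      simp only [this]
      exact hy
    · have : ∀ z : X, (E ×ˢ (Set.univ : Set X)).indicator (Function.uncurry ρ0) (y, z)
          = 0 := fun z => Set.indicator_of_notMem (by simp [hy]) _
      simp only [this, lintegral_zero]
      exact zero_le_one
  · filter_upwards [hged] with y hy
    have hρ0ym : Measurable (ρ0 y) := Kernel.measurable_rnDeriv_right Q κζ y
    have hyE : y ∈ E := by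
      rw [hE, Set.mem_setOf_eq]
      have h1 : ∫⁻ z, ρ0 y z ∂ζ = Q y Set.univ := by
        rw [hy, withDensity_apply _ MeasurableSet.univ, Measure.restrict_univ]
      rw [h1, measure_univ]
    have : (fun z => (E ×ˢ (Set.univ : Set X)).indicator (Function.uncurry ρ0) (y, z))
        = ρ0 y := funext fun z => Set.indicator_of_mem (by simp [hyE]) _
    rw [this]
    exact hy

end Density

/-- Let `X` be a Polish space and let `P` and `Q` be two strong Feller Markov kernels on `X`.
Then the composed kernel `PQ`, `(PQ)(x,A) = ∫ Q(y,A) P(x,dy)`, is ultra Feller. -/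
theorem comp_strongFeller_ultraFeller
    {X : Type*} [TopologicalSpace X] [PolishSpace X] [MeasurableSpace X] [BorelSpace X]
    (P Q : Kernel X X) [IsMarkovKernel P] [IsMarkovKernel Q]
    (hP : StrongFeller P) (hQ : StrongFeller Q) :
    UltraFeller (Q ∘ₖ P) := by
  intro x
  rw [tendsto_iff_seq_tendsto]
  intro u hu
  show Tendsto (fun n => tvDist ((Q ∘ₖ P) (u n)) ((Q ∘ₖ P) x)) atTop (𝓝 0)
  -- the reference measure dominating `P x` and all `P (u n)`
  set η : Measure X := P x + Measure.sum (fun n => (2 : ℝ≥0∞)⁻¹ ^ (n + 1) • P (u n)) with hηdef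
  have hη0 : ∀ A : Set X, MeasurableSet A → η A = 0 → P x A = 0 ∧ ∀ n, P (u n) A = 0 := by
    intro A hA h0
    rw [hηdef, Measure.add_apply, Measure.sum_apply _ hA] at h0
    obtain ⟨h1, h2⟩ := add_eq_zero.mp h0
    refine ⟨h1, fun n => ?_⟩
    have h3 := ENNReal.tsum_eq_zero.mp h2 n
    rw [Measure.smul_apply, smul_eq_mul] at h3
    have hc : (2 : ℝ≥0∞)⁻¹ ^ (n + 1) ≠ 0 := by
      apply pow_ne_zero
      simp
    exact (mul_eq_zero.mp h3).resolve_left hc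
  haveI hηfin : IsFiniteMeasure η := by
    constructor
    rw [hηdef, Measure.add_apply, Measure.sum_apply _ MeasurableSet.univ]
    refine ENNReal.add_lt_top.mpr ⟨measure_lt_top _ _, ?_⟩
    have h1 : ∀ n : ℕ, ((2 : ℝ≥0∞)⁻¹ ^ (n + 1) • P (u n)) Set.univ = (2 : ℝ≥0∞)⁻¹ ^ (n + 1) := by
      intro n
      rw [Measure.smul_apply, smul_eq_mul, measure_univ, mul_one]
    simp only [h1]
    calc ∑' n : ℕ, (2 : ℝ≥0∞)⁻¹ ^ (n + 1) ≤ ∑' n : ℕ, (2 : ℝ≥0∞)⁻¹ ^ n := by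
          refine ENNReal.tsum_le_tsum fun n => ?_
          rw [pow_succ]
          calc (2 : ℝ≥0∞)⁻¹ ^ n * 2⁻¹ ≤ (2 : ℝ≥0∞)⁻¹ ^ n * 1 := by
                gcongr
                exact ENNReal.inv_le_one.mpr one_le_two
            _ = (2 : ℝ≥0∞)⁻¹ ^ n := mul_one _
      _ = (1 - 2⁻¹)⁻¹ := ENNReal.tsum_geometric _
      _ < ⊤ := by
          rw [ENNReal.one_sub_inv_two, ENNReal.inv_lt_top]
          exact ENNReal.inv_pos.mpr ENNReal.ofNat_ne_top
  have hacx : P x ≪ η := Measure.AbsolutelyContinuous.mk fun s hs h0 => (hη0 s hs h0).1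
  have hacn : ∀ n, P (u n) ≪ η := fun n =>
    Measure.AbsolutelyContinuous.mk fun s hs h0 => (hη0 s hs h0).2 n
  set ζ : Measure X := η.bind (fun y => Q y) with hζdef
  have hζ : ∀ A : Set X, MeasurableSet A → ζ A = ∫⁻ y, Q y A ∂η := fun A hA =>
    Measure.bind_apply hA Q.measurable.aemeasurable
  haveI hζfin : IsFiniteMeasure ζ := by
    constructor
    rw [hζ Set.univ MeasurableSet.univ]
    calc ∫⁻ y, Q y Set.univ ∂η = ∫⁻ _, 1 ∂η := by simp [measure_univ]
      _ < ⊤ := by rw [lintegral_one]; exact measure_lt_top _ _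
  obtain ⟨ρ, hρm, hρ1, hρae⟩ := exists_density Q hQ η ζ hζ
  have haex : ∀ᵐ y ∂(P x), Q y = ζ.withDensity (ρ y) := hρae.filter_mono hacx.ae_le
  have haen : ∀ n, ∀ᵐ y ∂(P (u n)), Q y = ζ.withDensity (ρ y) := fun n =>
    hρae.filter_mono (hacn n).ae_le
  have hρym : ∀ y, Measurable (ρ y) := fun y => hρm.comp measurable_prodMk_left
  have hρzm : ∀ z, Measurable fun y => ρ y z := fun z => hρm.comp measurable_prodMk_right
  -- densities of the composed measures w.r.t. ζ
  have hId : ∀ μ : Measure X, IsProbabilityMeasure μ →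
      (∀ᵐ y ∂μ, Q y = ζ.withDensity (ρ y)) →
      ∀ A : Set X, MeasurableSet A →
        (μ.bind fun y => Q y) A = ∫⁻ z in A, (∫⁻ y, ρ y z ∂μ) ∂ζ := by
    intro μ hμ hae A hA
    rw [Measure.bind_apply hA Q.measurable.aemeasurable]
    have h1 : ∫⁻ y, Q y A ∂μ = ∫⁻ y, ∫⁻ z in A, ρ y z ∂ζ ∂μ := by
      refine lintegral_congr_ae ?_
      filter_upwards [hae] with y hy
      rw [hy, withDensity_apply _ hA]
    rw [h1]
    exact lintegral_lintegral_swap hρm.aemeasurable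
  have hWn : ∀ (n : ℕ) (A : Set X), MeasurableSet A →
      (Q ∘ₖ P) (u n) A = ∫⁻ z in A, (∫⁻ y, ρ y z ∂(P (u n))) ∂ζ := by
    intro n A hA
    rw [Kernel.comp_apply Q P (u n)]
    exact hId _ inferInstance (haen n) A hA
  have hWx : ∀ A : Set X, MeasurableSet A →
      (Q ∘ₖ P) x A = ∫⁻ z in A, (∫⁻ y, ρ y z ∂(P x)) ∂ζ := by
    intro A hA
    rw [Kernel.comp_apply Q P x]
    exact hId _ inferInstance haex A hA
  -- the tail functions G M and their properties
  have hGmeas : ∀ M : ℕ, Measurable fun y => ∫⁻ z, (ρ y z - min (ρ y z) (M : ℝ≥0∞)) ∂ζ :=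
    fun M => Measurable.lintegral_prod_right' (hρm.sub (hρm.min measurable_const))
  have hGle : ∀ M : ℕ, ∀ y, (∫⁻ z, (ρ y z - min (ρ y z) (M : ℝ≥0∞)) ∂ζ) ≤ 1 :=
    fun M y => le_trans (lintegral_mono fun z => tsub_le_self) (hρ1 y)
  -- convergence of the middle (truncated) part
  have hT1 : ∀ M : ℕ, Tendsto (fun n => ∫⁻ z,
      ((∫⁻ y, min (ρ y z) (M : ℝ≥0∞) ∂(P (u n))) - ∫⁻ y, min (ρ y z) (M : ℝ≥0∞) ∂(P x))
      + ((∫⁻ y, min (ρ y z) (M : ℝ≥0∞) ∂(P x)) - ∫⁻ y, min (ρ y z) (M : ℝ≥0∞) ∂(P (u n))) ∂ζ)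
      atTop (𝓝 0) := by
    intro M
    have hbd : ∀ (μ : Measure X), ∀ _ : IsProbabilityMeasure μ, ∀ z : X,
        (∫⁻ y, min (ρ y z) (M : ℝ≥0∞) ∂μ) ≤ (M : ℝ≥0∞) := by
      intro μ _ z
      calc ∫⁻ y, min (ρ y z) (M : ℝ≥0∞) ∂μ ≤ ∫⁻ _, (M : ℝ≥0∞) ∂μ :=
            lintegral_mono fun y => min_le_right _ _
        _ = (M : ℝ≥0∞) := by rw [lintegral_const, measure_univ, mul_one]
    have hmmeas : ∀ μ : Measure X, ∀ _ : SFinite μ,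
        Measurable fun z => ∫⁻ y, min (ρ y z) (M : ℝ≥0∞) ∂μ :=
      fun μ _ => Measurable.lintegral_prod_left' (hρm.min measurable_const)
    have hdct := tendsto_lintegral_of_dominated_convergence (μ := ζ)
      (F := fun n z =>
        ((∫⁻ y, min (ρ y z) (M : ℝ≥0∞) ∂(P (u n))) - ∫⁻ y, min (ρ y z) (M : ℝ≥0∞) ∂(P x))
        + ((∫⁻ y, min (ρ y z) (M : ℝ≥0∞) ∂(P x)) - ∫⁻ y, min (ρ y z) (M : ℝ≥0∞) ∂(P (u n))))
      (f := fun _ => 0) (bound := fun _ => (M : ℝ≥0∞) + (M : ℝ≥0∞))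
      (fun n => ((hmmeas _ inferInstance).sub (hmmeas _ inferInstance)).add
        ((hmmeas _ inferInstance).sub (hmmeas _ inferInstance)))
      (fun n => ae_of_all _ fun z => add_le_add
        (tsub_le_self.trans (hbd _ inferInstance z)) (tsub_le_self.trans (hbd _ inferInstance z)))
      (by
        rw [lintegral_const]
        exact ENNReal.mul_ne_top (by simp) (measure_ne_top _ _))
      (ae_of_all _ fun z => by
        have hz := hP.tendsto_lintegral hu ((hρzm z).min measurable_const)
          (C := (M : ℝ≥0∞)) (by simp) (fun y => min_le_right _ _)
        have hfin : (∫⁻ y, min (ρ y z) (M : ℝ≥0∞) ∂(P x)) ≠ ⊤ :=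
          ((hbd _ inferInstance z).trans_lt (ENNReal.natCast_lt_top M)).ne
        have h1 : Tendsto (fun n =>
            (∫⁻ y, min (ρ y z) (M : ℝ≥0∞) ∂(P (u n))) - ∫⁻ y, min (ρ y z) (M : ℝ≥0∞) ∂(P x))
            atTop (𝓝 0) := by
          have := ENNReal.Tendsto.sub hz tendsto_const_nhds (Or.inr hfin)
          simpa using this
        have h2 : Tendsto (fun n =>
            (∫⁻ y, min (ρ y z) (M : ℝ≥0∞) ∂(P x)) - ∫⁻ y, min (ρ y z) (M : ℝ≥0∞) ∂(P (u n)))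
            atTop (𝓝 0) := by
          have := ENNReal.Tendsto.sub (tendsto_const_nhds (x := ∫⁻ y, min (ρ y z) (M : ℝ≥0∞) ∂(P x))) hz (Or.inl hfin)
          simpa using this
        simpa using h1.add h2)
    simpa using hdct
  -- convergence of the tail part along the sequence
  have hT2 : ∀ M : ℕ, Tendsto
      (fun n => ∫⁻ y, (∫⁻ z, (ρ y z - min (ρ y z) (M : ℝ≥0∞)) ∂ζ) ∂(P (u n)))
      atTop (𝓝 (∫⁻ y, (∫⁻ z, (ρ y z - min (ρ y z) (M : ℝ≥0∞)) ∂ζ) ∂(P x))) :=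
    fun M => hP.tendsto_lintegral hu (hGmeas M) ENNReal.one_ne_top (hGle M)
  -- the tail vanishes as M → ∞
  have hT3 : Tendsto
      (fun M : ℕ => ∫⁻ y, (∫⁻ z, (ρ y z - min (ρ y z) (M : ℝ≥0∞)) ∂ζ) ∂(P x))
      atTop (𝓝 0) := by
    have hptw : ∀ y, Tendsto (fun M : ℕ => ∫⁻ z, (ρ y z - min (ρ y z) (M : ℝ≥0∞)) ∂ζ)
        atTop (𝓝 0) := by
      intro y
      have hfin : ∫⁻ z, ρ y z ∂ζ ≠ ⊤ := ((hρ1 y).trans_lt ENNReal.one_lt_top).ne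
      have haez : ∀ᵐ z ∂ζ, ρ y z < ⊤ := ae_lt_top (hρym y) hfin
      have hdct := tendsto_lintegral_of_dominated_convergence (μ := ζ)
        (F := fun (M : ℕ) z => ρ y z - min (ρ y z) (M : ℝ≥0∞)) (f := fun _ => 0)
        (bound := fun z => ρ y z)
        (fun M => (hρym y).sub ((hρym y).min measurable_const))
        (fun M => ae_of_all _ fun z => tsub_le_self) hfin ?_
      · simpa using hdct
      · filter_upwards [haez] with z hz
        obtain ⟨m, hm⟩ := ENNReal.exists_nat_gt hz.ne
        have hev : (fun M : ℕ => ρ y z - min (ρ y z) (M : ℝ≥0∞)) =ᶠ[atTop] fun _ => 0 := by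
          filter_upwards [eventually_ge_atTop m] with M hM
          have hle : ρ y z ≤ (M : ℝ≥0∞) := hm.le.trans (Nat.cast_le.mpr hM)
          rw [min_eq_left hle, tsub_self]
        exact (tendsto_congr' hev).mpr tendsto_const_nhds
    have hdct2 := tendsto_lintegral_of_dominated_convergence (μ := P x)
      (F := fun (M : ℕ) y => ∫⁻ z, (ρ y z - min (ρ y z) (M : ℝ≥0∞)) ∂ζ) (f := fun _ => 0)
      (bound := fun _ => 1) hGmeas (fun M => ae_of_all _ fun y => hGle M y)
      (by rw [lintegral_one, measure_univ]; exact ENNReal.one_ne_top)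
      (ae_of_all _ hptw)
    simpa using hdct2
  -- splitting estimate
  have hsplit : ∀ M n : ℕ,
      tvDist ((Q ∘ₖ P) (u n)) ((Q ∘ₖ P) x) ≤
        (∫⁻ y, (∫⁻ z, (ρ y z - min (ρ y z) (M : ℝ≥0∞)) ∂ζ) ∂(P (u n)))
        + (∫⁻ y, (∫⁻ z, (ρ y z - min (ρ y z) (M : ℝ≥0∞)) ∂ζ) ∂(P x))
        + ∫⁻ z,
            ((∫⁻ y, min (ρ y z) (M : ℝ≥0∞) ∂(P (u n))) - ∫⁻ y, min (ρ y z) (M : ℝ≥0∞) ∂(P x))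
            + ((∫⁻ y, min (ρ y z) (M : ℝ≥0∞) ∂(P x))
              - ∫⁻ y, min (ρ y z) (M : ℝ≥0∞) ∂(P (u n))) ∂ζ := by
    intro M n
    have hWn_m : Measurable fun z => ∫⁻ y, ρ y z ∂(P (u n)) :=
      Measurable.lintegral_prod_left' hρm
    have hW0_m : Measurable fun z => ∫⁻ y, ρ y z ∂(P x) :=
      Measurable.lintegral_prod_left' hρm
    have hVn_m : Measurable fun z => ∫⁻ y, min (ρ y z) (M : ℝ≥0∞) ∂(P (u n)) :=
      Measurable.lintegral_prod_left' (hρm.min measurable_const)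
    have hV0_m : Measurable fun z => ∫⁻ y, min (ρ y z) (M : ℝ≥0∞) ∂(P x) :=
      Measurable.lintegral_prod_left' (hρm.min measurable_const)
    have step4 : ∀ (μ : Measure X), ∀ _ : SFinite μ,
        (∫⁻ z, ((∫⁻ y, ρ y z ∂μ) - ∫⁻ y, min (ρ y z) (M : ℝ≥0∞) ∂μ) ∂ζ)
          ≤ ∫⁻ y, (∫⁻ z, (ρ y z - min (ρ y z) (M : ℝ≥0∞)) ∂ζ) ∂μ := by
      intro μ _
      have hswap : ∫⁻ z, (∫⁻ y, (ρ y z - min (ρ y z) (M : ℝ≥0∞)) ∂μ) ∂ζ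
          = ∫⁻ y, (∫⁻ z, (ρ y z - min (ρ y z) (M : ℝ≥0∞)) ∂ζ) ∂μ :=
        (lintegral_lintegral_swap ((hρm.sub (hρm.min measurable_const)).aemeasurable)).symm
      calc ∫⁻ z, ((∫⁻ y, ρ y z ∂μ) - ∫⁻ y, min (ρ y z) (M : ℝ≥0∞) ∂μ) ∂ζ
          ≤ ∫⁻ z, (∫⁻ y, (ρ y z - min (ρ y z) (M : ℝ≥0∞)) ∂μ) ∂ζ :=
            lintegral_mono fun z => lintegral_tsub_le μ ((hρzm z).min measurable_const)
        _ = _ := hswap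
    calc tvDist ((Q ∘ₖ P) (u n)) ((Q ∘ₖ P) x)
        ≤ ∫⁻ z, ((∫⁻ y, ρ y z ∂(P (u n))) - ∫⁻ y, ρ y z ∂(P x))
            + ((∫⁻ y, ρ y z ∂(P x)) - ∫⁻ y, ρ y z ∂(P (u n))) ∂ζ :=
          tvDist_le_lintegral hWn_m hW0_m (hWn n) hWx
      _ ≤ ∫⁻ z, (((∫⁻ y, ρ y z ∂(P (u n))) - ∫⁻ y, min (ρ y z) (M : ℝ≥0∞) ∂(P (u n)))
            + ((∫⁻ y, ρ y z ∂(P x)) - ∫⁻ y, min (ρ y z) (M : ℝ≥0∞) ∂(P x))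
            + (((∫⁻ y, min (ρ y z) (M : ℝ≥0∞) ∂(P (u n))) - ∫⁻ y, min (ρ y z) (M : ℝ≥0∞) ∂(P x))
              + ((∫⁻ y, min (ρ y z) (M : ℝ≥0∞) ∂(P x))
                - ∫⁻ y, min (ρ y z) (M : ℝ≥0∞) ∂(P (u n))))) ∂ζ := by
          refine lintegral_mono fun z => ?_
          exact ennreal_split _ _ _ _
            (lintegral_mono fun y => min_le_left _ _) (lintegral_mono fun y => min_le_left _ _)
      _ = (∫⁻ z, ((∫⁻ y, ρ y z ∂(P (u n))) - ∫⁻ y, min (ρ y z) (M : ℝ≥0∞) ∂(P (u n))) ∂ζ)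
            + (∫⁻ z, ((∫⁻ y, ρ y z ∂(P x)) - ∫⁻ y, min (ρ y z) (M : ℝ≥0∞) ∂(P x)) ∂ζ)
            + ∫⁻ z, (((∫⁻ y, min (ρ y z) (M : ℝ≥0∞) ∂(P (u n)))
                - ∫⁻ y, min (ρ y z) (M : ℝ≥0∞) ∂(P x))
              + ((∫⁻ y, min (ρ y z) (M : ℝ≥0∞) ∂(P x))
                - ∫⁻ y, min (ρ y z) (M : ℝ≥0∞) ∂(P (u n)))) ∂ζ := by
          rw [lintegral_add_right _ (show Measurable fun z =>
              ((∫⁻ y, min (ρ y z) (M : ℝ≥0∞) ∂(P (u n))) - ∫⁻ y, min (ρ y z) (M : ℝ≥0∞) ∂(P x))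
              + ((∫⁻ y, min (ρ y z) (M : ℝ≥0∞) ∂(P x)) - ∫⁻ y, min (ρ y z) (M : ℝ≥0∞) ∂(P (u n)))
              from (hVn_m.sub hV0_m).add (hV0_m.sub hVn_m)),
            lintegral_add_right _ (show Measurable fun z =>
              (∫⁻ y, ρ y z ∂(P x)) - ∫⁻ y, min (ρ y z) (M : ℝ≥0∞) ∂(P x)
              from hW0_m.sub hV0_m)]
      _ ≤ _ := add_le_add (add_le_add (step4 _ inferInstance) (step4 _ inferInstance)) le_rfl
  -- conclusion
  rw [ENNReal.tendsto_nhds_zero]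
  intro ε hε
  set δ := min (ε / 4) 1 with hδdef
  have hδpos : (0 : ℝ≥0∞) < δ := lt_min (ENNReal.div_pos hε.ne' (by norm_num)) zero_lt_one
  have hδtop : δ ≠ ⊤ := ((min_le_right _ _).trans_lt ENNReal.one_lt_top).ne
  obtain ⟨M, hM⟩ : ∃ M : ℕ,
      (∫⁻ y, (∫⁻ z, (ρ y z - min (ρ y z) (M : ℝ≥0∞)) ∂ζ) ∂(P x)) ≤ δ :=
    (ENNReal.tendsto_nhds_zero.mp hT3 δ hδpos).exists
  have hev1 := ENNReal.tendsto_nhds_zero.mp (hT1 M) δ hδpos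
  have hlt : (∫⁻ y, (∫⁻ z, (ρ y z - min (ρ y z) (M : ℝ≥0∞)) ∂ζ) ∂(P x))
      < (∫⁻ y, (∫⁻ z, (ρ y z - min (ρ y z) (M : ℝ≥0∞)) ∂ζ) ∂(P x)) + δ :=
    ENNReal.lt_add_right (hM.trans_lt (lt_top_iff_ne_top.mpr hδtop)).ne hδpos.ne'
  have hev2 := (hT2 M).eventually_lt_const hlt
  filter_upwards [hev1, hev2] with n h1 h2
  have h2' : (∫⁻ y, (∫⁻ z, (ρ y z - min (ρ y z) (M : ℝ≥0∞)) ∂ζ) ∂(P (u n))) ≤ δ + δ :=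
    h2.le.trans (add_le_add hM le_rfl)
  have h4 : δ + δ + δ + δ ≤ ε := by
    have hδ4 : δ ≤ ε / 4 := min_le_left _ _
    have hmul : 4 * (ε / 4) ≤ ε := by
      rcases eq_or_ne ε ⊤ with h | h
      · simp [h]
      · rw [ENNReal.mul_div_cancel' (by norm_num) (by norm_num)]
    calc δ + δ + δ + δ ≤ ε / 4 + ε / 4 + ε / 4 + ε / 4 := by gcongr
      _ = 4 * (ε / 4) := by ring
      _ ≤ ε := hmul
  calc tvDist ((Q ∘ₖ P) (u n)) ((Q ∘ₖ P) x) ≤ _ := hsplit M n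
    _ ≤ (δ + δ) + δ + δ := add_le_add (add_le_add h2' hM) h1
    _ ≤ ε := by
        calc (δ + δ) + δ + δ = δ + δ + δ + δ := by ring
          _ ≤ ε := h4
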